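/- Let Ω ≥ 1 be an integer, p_z ∈ (0,1), ω ≥ 0, C_u ≥ 0, and let φ(s) = (1−p_z)/(Ω(1−p_z)+p_z) for 1 ≤ s ≤ Ω and φ(s) = (1−p_z)·p_z^{s−Ω}/(Ω(1−p_z)+p_z) for s > Ω. Then the expected cost of the threshold-Ω policy satisfies Σ_{s=1}^{∞} φ(s)·(s + ω·C_u·1_{{s ≥ Ω}}) = ((1−p_z)/(Ω(1−p_z)+p_z)) · ( (Ω² − Ω)/2 + (Ω + ω·C_u)/(1−p_z) + p_z/(1−p_z)² ). -/

import Mathlib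

lemma sum_range_add_one_real (n : ℕ) :
    ∑ i ∈ Finset.range n, ((i : ℝ) + 1) = n * (n + 1) / 2 := by
  induction n with
  | zero => simp
  | succ k ih => rw [Finset.sum_range_succ, ih]; push_cast; ring

/-- closed form of the expected cost of the threshold-Ω policy,
`Σ_{s=1}^∞ φ s · (s + ω·C_u·1_{s ≥ Ω})
  = ((1−p_z)/(Ω(1−p_z)+p_z)) · ((Ω²−Ω)/2 + (Ω+ω·C_u)/(1−p_z) + p_z/(1−p_z)²)`. -/
theorem expected_cost_closed_form (Ω : ℕ) (hΩ : 1 ≤ Ω) (p_z ω C_u : ℝ)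
    (hpz0 : 0 < p_z) (hpz1 : p_z < 1) (hω : 0 ≤ ω) (hCu : 0 ≤ C_u)
    (φ : ℕ → ℝ)
    (hφ1 : ∀ s : ℕ, 1 ≤ s → s ≤ Ω →
      φ s = (1 - p_z) / ((Ω : ℝ) * (1 - p_z) + p_z))
    (hφ2 : ∀ s : ℕ, Ω < s →
      φ s = (1 - p_z) * p_z ^ (s - Ω) / ((Ω : ℝ) * (1 - p_z) + p_z)) :
    HasSum (fun s : ℕ => φ (s + 1) *
        (((s : ℝ) + 1) + ω * C_u * (if Ω ≤ s + 1 then 1 else 0)))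
      ((1 - p_z) / ((Ω : ℝ) * (1 - p_z) + p_z) *
        (((Ω : ℝ) ^ 2 - (Ω : ℝ)) / 2 + ((Ω : ℝ) + ω * C_u) / (1 - p_z)
          + p_z / (1 - p_z) ^ 2)) := by
  have h1p : (1:ℝ) - p_z ≠ 0 := by linarith
  have hΩ1 : (1:ℝ) ≤ (Ω : ℝ) := by exact_mod_cast hΩ
  have hD : (Ω : ℝ) * (1 - p_z) + p_z ≠ 0 := by nlinarith
  set c : ℝ := (1 - p_z) / ((Ω : ℝ) * (1 - p_z) + p_z) with hc
  set f : ℕ → ℝ := fun s : ℕ => φ (s + 1) *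
      (((s : ℝ) + 1) + ω * C_u * (if Ω ≤ s + 1 then 1 else 0)) with hf
  have hgeo : HasSum (fun n : ℕ => p_z ^ n) (1 - p_z)⁻¹ :=
    hasSum_geometric_of_lt_one hpz0.le hpz1
  have hngeo : HasSum (fun n : ℕ => (n : ℝ) * p_z ^ n) (p_z / (1 - p_z) ^ 2) :=
    hasSum_coe_mul_geometric_of_norm_lt_one
      (by rw [Real.norm_eq_abs, abs_of_pos hpz0]; exact hpz1)
  have htail : HasSum (fun n : ℕ => f (n + Ω))
      (c * p_z * (((Ω : ℝ) + 1 + ω * C_u) * (1 - p_z)⁻¹ + p_z / (1 - p_z) ^ 2)) := by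
    have h := ((hgeo.mul_left ((Ω : ℝ) + 1 + ω * C_u)).add hngeo).mul_left (c * p_z)
    have heq : (fun n : ℕ => f (n + Ω)) =
        fun n : ℕ => c * p_z * (((Ω : ℝ) + 1 + ω * C_u) * p_z ^ n + (n : ℝ) * p_z ^ n) := by
      funext n
      have hs : Ω < n + Ω + 1 := by omega
      rw [hf]
      simp only
      rw [hφ2 _ hs]
      have h1 : n + Ω + 1 - Ω = n + 1 := by omega
      have h2 : (if Ω ≤ n + Ω + 1 then (1:ℝ) else 0) = 1 := if_pos (by omega)
      rw [h1, h2, hc]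
      push_cast
      field_simp
      ring
    rw [heq]
    exact h
  have hsum := (hasSum_nat_add_iff (f := f) Ω).mp htail
  have hsplit : ∀ i ∈ Finset.range Ω,
      f i = c * ((i : ℝ) + 1) + (if Ω ≤ i + 1 then c * (ω * C_u) else 0) := by
    intro i hi
    rw [Finset.mem_range] at hi
    rw [hf]
    simp only
    rw [hφ1 (i + 1) (by omega) (by omega)]
    by_cases h : Ω ≤ i + 1
    · rw [if_pos h, if_pos h]; ring
    · rw [if_neg h, if_neg h]; ring
  have hind : ∑ i ∈ Finset.range Ω, (if Ω ≤ i + 1 then c * (ω * C_u) else 0)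
      = c * (ω * C_u) := by
    rw [Finset.sum_eq_single (Ω - 1)]
    · exact if_pos (by omega)
    · intro b hb hne
      rw [Finset.mem_range] at hb
      exact if_neg (by omega)
    · intro h
      exact absurd (Finset.mem_range.mpr (by omega)) h
  have hhead : ∑ i ∈ Finset.range Ω, f i
      = c * ((Ω : ℝ) * ((Ω : ℝ) + 1) / 2) + c * (ω * C_u) := by
    rw [Finset.sum_congr rfl hsplit, Finset.sum_add_distrib, hind,
      ← Finset.mul_sum, sum_range_add_one_real]
  rw [hhead] at hsum
  convert hsum using 1
  · rfl
  rw [hc]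
  field_simp
  ring
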